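/- Let R be a commutative ring with unity having no non-trivial idempotent and such that the clean graph Cl(R) is not a complete graph. Then the strong resolving graph of Cl(R) is the disjoint union of two complete graphs, each on |U(R)| vertices: one on the vertex set {(0,u) : u ∈ U(R)} and one on {(1,u) : u ∈ U(R)}. Moreover, V(Cl(R)) equals the vertex set of the strong resolving graph of Cl(R). -/

import Mathlib

variable {V : Type*}

/-- In a graph `G`, `u` is maximally distant from `v` if `d(v,w) ≤ d(u,v)` for every
neighbour `w` of `u`. -/
def IsMaxDistFrom (G : SimpleGraph V) (u v : V) : Prop :=
  ∀ w ∈ G.neighborSet u, G.dist v w ≤ G.dist u v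

/-- `u` and `v` are mutually maximally distant in `G`. -/
def IsMMD (G : SimpleGraph V) (u v : V) : Prop :=
  IsMaxDistFrom G u v ∧ IsMaxDistFrom G v u

/-- The boundary of a graph: the set of vertices that are mutually maximally distant
from some other vertex.  This is the vertex set of the strong resolving graph. -/
def graphBoundary (G : SimpleGraph V) : Set V :=
  {u | ∃ v, u ≠ v ∧ IsMMD G u v}

/-- The strong resolving graph, realised on the full vertex set (vertices outside the
boundary are isolated): two distinct vertices are adjacent iff they are mutually
maximally distant. -/
def srGraph (G : SimpleGraph V) : SimpleGraph V where
  Adj u v := u ≠ v ∧ IsMMD G u v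
  symm := ⟨fun u v h => ⟨h.1.symm, h.2.2, h.2.1⟩⟩
  loopless := ⟨fun u h => h.1 rfl⟩

/-- The independence number of a graph: the largest cardinality of a finite set of
pairwise non-adjacent vertices. -/
noncomputable def indNum (G : SimpleGraph V) : ℕ :=
  sSup {n | ∃ s : Finset V, ((s : Set V).Pairwise fun a b => ¬ G.Adj a b) ∧ s.card = n}

/-- `S` is a strong resolving set of `G`: every pair of distinct vertices `u, v` is
strongly resolved by some `w ∈ S`, i.e. `v` lies on a shortest `u`-`w` path or `u` lies
on a shortest `v`-`w` path. -/
def IsStrongResolvingSet (G : SimpleGraph V) (S : Set V) : Prop :=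
  ∀ u v : V, u ≠ v → ∃ w ∈ S,
    G.dist u w = G.dist u v + G.dist v w ∨ G.dist v w = G.dist v u + G.dist u w

/-- The strong metric dimension of a graph: the smallest cardinality of a (finite)
strong resolving set. -/
noncomputable def sdim (G : SimpleGraph V) : ℕ :=
  sInf {n | ∃ S : Finset V, IsStrongResolvingSet G (S : Set V) ∧ S.card = n}

/-- Vertices of the clean graph: pairs `(e, u)` with `e` an idempotent and `u` a unit. -/
abbrev CleanVtx (R : Type*) [CommRing R] : Type _ := {e : R // IsIdempotentElem e} × Rˣ

/-- The clean graph `Cl(R)` of a commutative ring `R`: distinct vertices `(e,u)`, `(f,v)`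
are adjacent iff `e * f = 0` or `u * v = 1`. -/
def cleanGraph (R : Type*) [CommRing R] : SimpleGraph (CleanVtx R) where
  Adj x y := x ≠ y ∧ ((x.1 : R) * (y.1 : R) = 0 ∨ (x.2 : R) * (y.2 : R) = 1)
  symm := by
    constructor
    rintro x y ⟨hxy, h | h⟩
    · exact ⟨hxy.symm, Or.inl (by rwa [mul_comm])⟩
    · exact ⟨hxy.symm, Or.inr (by rwa [mul_comm])⟩
  loopless := ⟨fun x h => h.1 rfl⟩

/-- The vertex set of `Cl₂(R)`: clean vertices `(e,u)` with `e ≠ 0`. -/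
def clean2Set (R : Type*) [CommRing R] : Set (CleanVtx R) := {x | (x.1 : R) ≠ 0}

/-- `Cl₂(R)`, the subgraph of `Cl(R)` induced on the vertices `(e,u)` with `e ≠ 0`. -/
def clean2Graph (R : Type*) [CommRing R] : SimpleGraph (clean2Set R) :=
  SimpleGraph.induce (clean2Set R) (cleanGraph R)

/-- `U''(R)`: the set of units `u` with `u² ≠ 1`. -/
def uSecond (R : Type*) [CommRing R] : Set Rˣ := {u | (u : R) * (u : R) ≠ 1}

/-- `|Id(R)*|`: the number of non-trivial idempotents of `R`. -/
noncomputable def idStarNum (R : Type*) [CommRing R] : ℕ :=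
  {e : R | IsIdempotentElem e ∧ e ≠ 0 ∧ e ≠ 1}.ncard

/-- `|Id⊥(R)*|`: the maximum cardinality of a set of nonzero pairwise orthogonal
idempotents of `R`. -/
noncomputable def orthIdemNum (R : Type*) [CommRing R] : ℕ :=
  sSup {n | ∃ s : Finset R, (∀ e ∈ s, IsIdempotentElem e ∧ e ≠ 0) ∧
    ((s : Set R).Pairwise fun e f => e * f = 0) ∧ s.card = n}



section Aux

variable {R : Type*} [CommRing R] [Nontrivial R]

open SimpleGraph

private lemma cg_adj_left_zero {x y : CleanVtx R} (h0 : (x.1 : R) = 0) (hxy : x ≠ y) :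
    (cleanGraph R).Adj x y :=
  ⟨hxy, Or.inl (by rw [h0, zero_mul])⟩

/-- the zero vertex with a given unit -/
private def zv (u : Rˣ) : CleanVtx R := (⟨0, IsIdempotentElem.zero⟩, u)

private def ov (u : Rˣ) : CleanVtx R := (⟨1, IsIdempotentElem.one⟩, u)

private lemma cg_connected : (cleanGraph R).Connected := by
  rw [SimpleGraph.connected_iff]
  refine ⟨fun x y => ?_, ⟨zv 1⟩⟩
  by_cases hxy : x = y
  · exact hxy ▸ SimpleGraph.Reachable.refl x
  by_cases hx0 : (x.1 : R) = 0
  · exact (cg_adj_left_zero hx0 hxy).reachable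
  · have hzx : (zv x.2 : CleanVtx R) ≠ x := fun h => hx0 (by rw [← h]; rfl)
    have h1 : (cleanGraph R).Adj x (zv x.2) :=
      (cg_adj_left_zero (x := (zv x.2 : CleanVtx R)) rfl hzx).symm
    by_cases hzy : (zv x.2 : CleanVtx R) = y
    · exact h1.reachable.trans (hzy ▸ SimpleGraph.Reachable.refl _)
    · exact h1.reachable.trans
        (cg_adj_left_zero (x := (zv x.2 : CleanVtx R)) rfl hzy).reachable

private lemma cg_dist_le_two (hid : ∀ e : R, IsIdempotentElem e → e = 0 ∨ e = 1)
    (x y : CleanVtx R) : (cleanGraph R).dist x y ≤ 2 := by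
  by_cases hxy : x = y
  · simp [hxy, SimpleGraph.dist_self]
  by_cases hadj : (cleanGraph R).Adj x y
  · rw [SimpleGraph.dist_eq_one_iff_adj.mpr hadj]; omega
  · have hx1 : (x.1 : R) ≠ 0 := fun h => hadj (cg_adj_left_zero h hxy)
    have hy1 : (y.1 : R) ≠ 0 := fun h => hadj ((cg_adj_left_zero h (Ne.symm hxy)).symm)
    have hzx : (zv 1 : CleanVtx R) ≠ x := fun h => hx1 (by rw [← h]; rfl)
    have hzy : (zv 1 : CleanVtx R) ≠ y := fun h => hy1 (by rw [← h]; rfl)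
    have h1 : (cleanGraph R).Adj x (zv 1) :=
      (cg_adj_left_zero (x := (zv 1 : CleanVtx R)) rfl hzx).symm
    have h2 : (cleanGraph R).Adj (zv 1) y :=
      cg_adj_left_zero (x := (zv 1 : CleanVtx R)) rfl hzy
    have := SimpleGraph.dist_le (SimpleGraph.Walk.cons h1 (SimpleGraph.Walk.cons h2 SimpleGraph.Walk.nil))
    simpa using this

private lemma cg_two_le_dist {x y : CleanVtx R} (hxy : x ≠ y)
    (hadj : ¬ (cleanGraph R).Adj x y) : 2 ≤ (cleanGraph R).dist x y := by
  have hpos := cg_connected.pos_dist_of_ne hxy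
  have hne1 : (cleanGraph R).dist x y ≠ 1 := fun h =>
    hadj (SimpleGraph.dist_eq_one_iff_adj.mp h)
  omega

/-- a unit v' ≠ v with v * v' ≠ 1, from non-completeness -/
private lemma exists_far_unit (hid : ∀ e : R, IsIdempotentElem e → e = 0 ∨ e = 1)
    (hnc : cleanGraph R ≠ ⊤) (v : Rˣ) :
    ∃ v' : Rˣ, v' ≠ v ∧ (v : R) * (v' : R) ≠ 1 := by
  have hex : ∃ a b : CleanVtx R, a ≠ b ∧ ¬ (cleanGraph R).Adj a b := by
    by_contra h
    push_neg at h
    apply hnc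
    ext a b
    simp only [SimpleGraph.top_adj]
    exact ⟨fun h' => h'.1, fun hne => h a b hne⟩
  obtain ⟨a, b, hab, hnadj⟩ := hex
  have h1 : (a.2 : R) * (b.2 : R) ≠ 1 := fun h => hnadj ⟨hab, Or.inr h⟩
  have h0 : (a.1 : R) * (b.1 : R) ≠ 0 := fun h => hnadj ⟨hab, Or.inl h⟩
  have ha1 : (a.1 : R) = 1 := by
    rcases hid a.1 a.1.2 with h | h
    · exact absurd (by rw [h, zero_mul]) h0
    · exact h
  have hb1 : (b.1 : R) = 1 := by
    rcases hid b.1 b.1.2 with h | h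
    · exact absurd (by rw [h, mul_zero]) h0
    · exact h
  have h2 : a.2 ≠ b.2 := by
    intro h
    exact hab (Prod.ext (Subtype.ext (ha1.trans hb1.symm)) h)
  -- now case on v
  by_cases hva : v = a.2
  · exact ⟨b.2, fun h => h2 (h ▸ hva).symm, hva ▸ h1⟩
  by_cases hvb : v = b.2
  · refine ⟨a.2, fun h => h2 (hvb ▸ h), fun h => h1 ?_⟩
    rw [mul_comm] at h; rw [← hvb]; exact h
  by_cases hvA : (v : R) * (a.2 : R) = 1
  · refine ⟨b.2, fun h => hvb h.symm, ?_⟩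
    · intro h
      -- v * a.2 = 1 and v * b.2 = 1 → a.2 = b.2
      have : a.2 = v⁻¹ := by
        have : v * a.2 = 1 := Units.ext (by simpa using hvA)
        exact eq_inv_of_mul_eq_one_right (by rw [mul_comm] at this ⊢; exact this)
      have hb : b.2 = v⁻¹ := by
        have : v * b.2 = 1 := Units.ext (by simpa using h)
        exact eq_inv_of_mul_eq_one_right (by rw [mul_comm] at this ⊢; exact this)
      exact h2 (this.trans hb.symm)
  · exact ⟨a.2, fun h => hva h.symm, hvA⟩

/-- if the target is a zero-vertex, every vertex is maximally distant from it -/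
private lemma maxdist_to_zero {x y : CleanVtx R} (hxy : x ≠ y) (hy : (y.1 : R) = 0) :
    IsMaxDistFrom (cleanGraph R) x y := by
  intro w hw
  have hd : 1 ≤ (cleanGraph R).dist x y := cg_connected.pos_dist_of_ne hxy
  by_cases hwy : y = w
  · simp [← hwy, SimpleGraph.dist_self]
  · calc (cleanGraph R).dist y w = 1 :=
        SimpleGraph.dist_eq_one_iff_adj.mpr (cg_adj_left_zero hy hwy)
      _ ≤ (cleanGraph R).dist x y := hd

/-- a zero-vertex is never maximally distant from a one-vertex -/
private lemma not_maxdist_zero_one (hid : ∀ e : R, IsIdempotentElem e → e = 0 ∨ e = 1)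
    (hnc : cleanGraph R ≠ ⊤) {a b : CleanVtx R}
    (ha : (a.1 : R) = 0) (hb : (b.1 : R) = 1) :
    ¬ IsMaxDistFrom (cleanGraph R) a b := by
  intro h
  obtain ⟨v', hv'ne, hv'⟩ := exists_far_unit hid hnc b.2
  set w : CleanVtx R := ov v' with hw
  have haw : a ≠ w := by
    intro hEq
    have : (a.1 : R) = 1 := by rw [hEq]; rfl
    rw [ha] at this; exact zero_ne_one this
  have hab : a ≠ b := by
    intro hEq; rw [hEq, hb] at ha; exact one_ne_zero ha
  have hwmem : w ∈ (cleanGraph R).neighborSet a := cg_adj_left_zero ha haw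
  have hdab : (cleanGraph R).dist a b = 1 :=
    SimpleGraph.dist_eq_one_iff_adj.mpr (cg_adj_left_zero ha hab)
  have hbw : b ≠ w := by
    intro hEq
    exact hv'ne (congrArg Prod.snd hEq).symm
  have hnadj : ¬ (cleanGraph R).Adj b w := by
    rintro ⟨-, h0 | h1⟩
    · rw [hb] at h0
      simp only [hw, ov, one_mul] at h0
      exact one_ne_zero h0
    · exact hv' h1
  have h2 := cg_two_le_dist hbw hnadj
  have := h w hwmem
  omega

private lemma mmd_zero_zero {x y : CleanVtx R} (hxy : x ≠ y)
    (hx : (x.1 : R) = 0) (hy : (y.1 : R) = 0) : IsMMD (cleanGraph R) x y :=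
  ⟨maxdist_to_zero hxy hy, maxdist_to_zero hxy.symm hx⟩

private lemma units_eq_of_coe_mul_eq_one {p q : Rˣ} (h : (p : R) * (q : R) = 1) :
    q = p⁻¹ :=
  eq_inv_of_mul_eq_one_right (Units.ext (by simpa using h))

private lemma maxdist_one_one (hid : ∀ e : R, IsIdempotentElem e → e = 0 ∨ e = 1)
    {x y : CleanVtx R} (hxy : x ≠ y)
    (hx : (x.1 : R) = 1) (hy : (y.1 : R) = 1) :
    IsMaxDistFrom (cleanGraph R) x y := by
  by_cases hadj : (cleanGraph R).Adj x y
  · have hu : (x.2 : R) * (y.2 : R) = 1 := by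
      rcases hadj.2 with h0 | h1
      · rw [hx, hy, one_mul] at h0; exact absurd h0 one_ne_zero
      · exact h1
    have hdxy : (cleanGraph R).dist x y = 1 := SimpleGraph.dist_eq_one_iff_adj.mpr hadj
    intro w hw
    by_cases hwy : w = y
    · rw [hwy, SimpleGraph.dist_self]; omega
    rcases hid w.1 w.1.2 with hw0 | hw1
    · have : (cleanGraph R).Adj y w :=
        (cg_adj_left_zero (x := w) (y := y) hw0 hwy).symm
      rw [SimpleGraph.dist_eq_one_iff_adj.mpr this, hdxy]
    · exfalso
      apply hwy
      have hxw : (x.2 : R) * (w.2 : R) = 1 := by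
        rcases hw.2 with h0 | h1
        · rw [hx, hw1, one_mul] at h0; exact absurd h0 one_ne_zero
        · exact h1
      exact Prod.ext (Subtype.ext (hw1.trans hy.symm))
        ((units_eq_of_coe_mul_eq_one hxw).trans
          (units_eq_of_coe_mul_eq_one hu).symm)
  · have hdxy : (cleanGraph R).dist x y = 2 :=
      le_antisymm (cg_dist_le_two hid x y) (cg_two_le_dist hxy hadj)
    intro w _
    rw [hdxy]
    exact cg_dist_le_two hid y w

private lemma mmd_one_one (hid : ∀ e : R, IsIdempotentElem e → e = 0 ∨ e = 1)
    {x y : CleanVtx R} (hxy : x ≠ y)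
    (hx : (x.1 : R) = 1) (hy : (y.1 : R) = 1) : IsMMD (cleanGraph R) x y :=
  ⟨maxdist_one_one hid hxy hx hy, maxdist_one_one hid hxy.symm hy hx⟩

end Aux

theorem statement_5 (R : Type*) [CommRing R] [Nontrivial R]
    (hid : ∀ e : R, IsIdempotentElem e → e = 0 ∨ e = 1)
    (hnc : cleanGraph R ≠ ⊤) :
    (∀ x : CleanVtx R, x ∈ graphBoundary (cleanGraph R)) ∧
    (∀ x y : CleanVtx R, x ≠ y →
      ((srGraph (cleanGraph R)).Adj x y ↔
        ((x.1 : R) = 0 ∧ (y.1 : R) = 0) ∨ ((x.1 : R) = 1 ∧ (y.1 : R) = 1))) := by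
  constructor
  · intro x
    obtain ⟨v', hv'ne, -⟩ := exists_far_unit hid hnc x.2
    rcases hid x.1 x.1.2 with hx | hx
    · refine ⟨(⟨0, IsIdempotentElem.zero⟩, v'), ?_, ?_⟩
      · intro h; exact hv'ne (congrArg Prod.snd h).symm
      · exact mmd_zero_zero (fun h => hv'ne (congrArg Prod.snd h).symm) hx rfl
    · refine ⟨(⟨1, IsIdempotentElem.one⟩, v'), ?_, ?_⟩
      · intro h; exact hv'ne (congrArg Prod.snd h).symm
      · exact mmd_one_one hid (fun h => hv'ne (congrArg Prod.snd h).symm) hx rfl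
  · intro x y hxy
    constructor
    · rintro ⟨-, hmmd⟩
      rcases hid x.1 x.1.2 with hx | hx <;> rcases hid y.1 y.1.2 with hy | hy
      · exact Or.inl ⟨hx, hy⟩
      · exact absurd hmmd.1 (not_maxdist_zero_one hid hnc hx hy)
      · exact absurd hmmd.2 (not_maxdist_zero_one hid hnc hy hx)
      · exact Or.inr ⟨hx, hy⟩
    · rintro (⟨hx, hy⟩ | ⟨hx, hy⟩)
      · exact ⟨hxy, mmd_zero_zero hxy hx hy⟩
      · exact ⟨hxy, mmd_one_one hid hxy hx hy⟩
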